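/- Fix a positive integer n. There exists a polynomial p with integer coefficients of degree 2n and leading coefficient 1, depending only on n, such that for every integer d ≥ 2, the number of bad tuples (j¹, j², j³, j⁴) with j^1_0 = j^2_0 = 1 and j^3_0 = j^4_0 = 2 equals p(d). -/

import Mathlib

/-!
STATEMENT 6: Fix a positive integer `n`. There exists a polynomial `p` with integer
coefficients of degree `2n` and leading coefficient `1`, depending only on `n`, such that for
every integer `d ≥ 2`, the number of bad tuples `(j¹, j², j³, j⁴)` (sequences of length `n+1`
with entries in `{1, …, d}`) with `j^1_0 = j^2_0 = 1` and `j^3_0 = j^4_0 = 2` equals `p(d)`.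
-/

/-- At one step, the four pairs of consecutive values can be split into two disjoint pairs
that agree both at time `i` and at time `i+1`. -/
def StepOK (u v : Fin 4 → ℕ) : Prop :=
  ∃ p q r s : Fin 4, ({p, q, r, s} : Finset (Fin 4)) = Finset.univ ∧
    u p = u q ∧ v p = v q ∧ u r = u s ∧ v r = v s

/-- A tuple of four sequences `j k : Fin (n+1) → ℕ` is bad if the pairing condition holds
at every step `i ∈ {0, …, n−1}`. -/
def IsBad (n : ℕ) (j : Fin 4 → Fin (n + 1) → ℕ) : Prop :=
  ∀ i : Fin n, StepOK (fun k => j k i.castSucc) (fun k => j k i.succ)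

/-- The number of bad tuples with entries in `{1, …, d}` with `j^1_0 = j^2_0 = 1` and
`j^3_0 = j^4_0 = 2`. -/
noncomputable def badCountOneTwo (n d : ℕ) : ℕ :=
  Nat.card {j : Fin 4 → Fin (n + 1) → ℕ //
    (∀ k i, j k i ∈ Finset.Icc 1 d) ∧ IsBad n j ∧
      j 0 0 = 1 ∧ j 1 0 = 1 ∧ j 2 0 = 2 ∧ j 3 0 = 2}


namespace BadAux

def Q12 (v : Fin 4 → ℕ) : Prop := v 0 = v 1 ∧ v 2 = v 3
def Q13 (v : Fin 4 → ℕ) : Prop := v 0 = v 2 ∧ v 1 = v 3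
def Q14 (v : Fin 4 → ℕ) : Prop := v 0 = v 3 ∧ v 1 = v 2
def TE (v : Fin 4 → ℕ) : Prop := v 0 = v 1 ∧ v 1 = v 2 ∧ v 2 = v 3
def T12 (v : Fin 4 → ℕ) : Prop := Q12 v ∧ v 0 ≠ v 2
def T13 (v : Fin 4 → ℕ) : Prop := Q13 v ∧ v 0 ≠ v 1
def T14 (v : Fin 4 → ℕ) : Prop := Q14 v ∧ v 0 ≠ v 1

lemma mem4 {p q r s : Fin 4} (hu : ({p, q, r, s} : Finset (Fin 4)) = Finset.univ) :
    ∀ x : Fin 4, x = p ∨ x = q ∨ x = r ∨ x = s := by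
  intro x
  have hx := Finset.mem_univ x
  rw [← hu] at hx
  simpa using hx

set_option maxHeartbeats 1000000 in
lemma stepOK_paired {u v : Fin 4 → ℕ} (h : StepOK u v) : Q12 v ∨ Q13 v ∨ Q14 v := by
  obtain ⟨p, q, r, s, hu, h1, h2, h3, h4⟩ := h
  have hm := mem4 hu
  unfold Q12 Q13 Q14
  rcases hm 0 with h|h|h|h <;> rcases hm 1 with g|g|g|g <;>
    rcases hm 2 with e|e|e|e <;> rcases hm 3 with f|f|f|f <;>
    subst_vars <;> omega

set_option maxHeartbeats 1000000 in
lemma stepOK_T12 {u v : Fin 4 → ℕ} (hu : T12 u) (h : StepOK u v) : Q12 v := by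
  obtain ⟨⟨hu1, hu2⟩, hu3⟩ := hu
  obtain ⟨p, q, r, s, huu, h1, h2, h3, h4⟩ := h
  have hm := mem4 huu
  unfold Q12
  rcases hm 0 with h|h|h|h <;> rcases hm 1 with g|g|g|g <;>
    rcases hm 2 with e|e|e|e <;> rcases hm 3 with f|f|f|f <;>
    subst_vars <;> omega

set_option maxHeartbeats 1000000 in
lemma stepOK_T13 {u v : Fin 4 → ℕ} (hu : T13 u) (h : StepOK u v) : Q13 v := by
  obtain ⟨⟨hu1, hu2⟩, hu3⟩ := hu
  obtain ⟨p, q, r, s, huu, h1, h2, h3, h4⟩ := h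
  have hm := mem4 huu
  unfold Q13
  rcases hm 0 with h|h|h|h <;> rcases hm 1 with g|g|g|g <;>
    rcases hm 2 with e|e|e|e <;> rcases hm 3 with f|f|f|f <;>
    subst_vars <;> omega

set_option maxHeartbeats 1000000 in
lemma stepOK_T14 {u v : Fin 4 → ℕ} (hu : T14 u) (h : StepOK u v) : Q14 v := by
  obtain ⟨⟨hu1, hu2⟩, hu3⟩ := hu
  obtain ⟨p, q, r, s, huu, h1, h2, h3, h4⟩ := h
  have hm := mem4 huu
  unfold Q14
  rcases hm 0 with h|h|h|h <;> rcases hm 1 with g|g|g|g <;>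
    rcases hm 2 with e|e|e|e <;> rcases hm 3 with f|f|f|f <;>
    subst_vars <;> omega

lemma stepOK_of_Q12 {u v : Fin 4 → ℕ} (hu : Q12 u) (hv : Q12 v) : StepOK u v :=
  ⟨0, 1, 2, 3, by decide, hu.1, hv.1, hu.2, hv.2⟩

lemma stepOK_of_Q13 {u v : Fin 4 → ℕ} (hu : Q13 u) (hv : Q13 v) : StepOK u v :=
  ⟨0, 2, 1, 3, by decide, hu.1, hv.1, hu.2, hv.2⟩

lemma stepOK_of_Q14 {u v : Fin 4 → ℕ} (hu : Q14 u) (hv : Q14 v) : StepOK u v :=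
  ⟨0, 3, 1, 2, by decide, hu.1, hv.1, hu.2, hv.2⟩

lemma TE_Q12 {v} (h : TE v) : Q12 v := by unfold TE Q12 at *; omega
lemma TE_Q13 {v} (h : TE v) : Q13 v := by unfold TE Q13 at *; omega
lemma TE_Q14 {v} (h : TE v) : Q14 v := by unfold TE Q14 at *; omega

lemma stepOK_iff_TE {u v : Fin 4 → ℕ} (hu : TE u) :
    StepOK u v ↔ (Q12 v ∨ Q13 v ∨ Q14 v) := by
  refine ⟨stepOK_paired, ?_⟩
  rintro (h|h|h)
  · exact stepOK_of_Q12 (TE_Q12 hu) h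
  · exact stepOK_of_Q13 (TE_Q13 hu) h
  · exact stepOK_of_Q14 (TE_Q14 hu) h

lemma stepOK_iff_T12 {u v : Fin 4 → ℕ} (hu : T12 u) : StepOK u v ↔ Q12 v :=
  ⟨stepOK_T12 hu, fun h => stepOK_of_Q12 hu.1 h⟩

lemma stepOK_iff_T13 {u v : Fin 4 → ℕ} (hu : T13 u) : StepOK u v ↔ Q13 v :=
  ⟨stepOK_T13 hu, fun h => stepOK_of_Q13 hu.1 h⟩

lemma stepOK_iff_T14 {u v : Fin 4 → ℕ} (hu : T14 u) : StepOK u v ↔ Q14 v :=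
  ⟨stepOK_T14 hu, fun h => stepOK_of_Q14 hu.1 h⟩

lemma paired_typed {v : Fin 4 → ℕ} (h : Q12 v ∨ Q13 v ∨ Q14 v) :
    TE v ∨ T12 v ∨ T13 v ∨ T14 v := by
  rcases h with ⟨h1,h2⟩|⟨h1,h2⟩|⟨h1,h2⟩
  · by_cases hv : v 0 = v 2
    · exact Or.inl ⟨h1, by omega, h2⟩
    · exact Or.inr (Or.inl ⟨⟨h1, h2⟩, hv⟩)
  · by_cases hv : v 0 = v 1
    · exact Or.inl ⟨hv, by omega, by omega⟩
    · exact Or.inr (Or.inr (Or.inl ⟨⟨h1, h2⟩, hv⟩))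
  · by_cases hv : v 0 = v 1
    · exact Or.inl ⟨hv, by omega, by omega⟩
    · exact Or.inr (Or.inr (Or.inr ⟨⟨h1, h2⟩, hv⟩))

-- exclusivity
lemma TE_not_T12 {v} (h : TE v) : ¬ T12 v := by unfold TE T12 Q12 at *; omega
lemma TE_not_T13 {v} (h : TE v) : ¬ T13 v := by unfold TE T13 Q13 at *; omega
lemma TE_not_T14 {v} (h : TE v) : ¬ T14 v := by unfold TE T14 Q14 at *; omega
lemma T12_not_T13 {v} (h : T12 v) : ¬ T13 v := by unfold T12 T13 Q12 Q13 at *; omega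
lemma T12_not_T14 {v} (h : T12 v) : ¬ T14 v := by unfold T12 T14 Q12 Q14 at *; omega
lemma T13_not_T14 {v} (h : T13 v) : ¬ T14 v := by unfold T13 T14 Q13 Q14 at *; omega
lemma T12_not_TE {v} (h : T12 v) : ¬ TE v := fun g => TE_not_T12 g h
lemma T13_not_TE {v} (h : T13 v) : ¬ TE v := fun g => TE_not_T13 g h
lemma T14_not_TE {v} (h : T14 v) : ¬ TE v := fun g => TE_not_T14 g h

end BadAux

namespace BadAux

open Finset

attribute [local instance 10] Classical.propDecidable

def box (d : ℕ) : Finset ℕ := Finset.Icc 1 d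

lemma card_box (d : ℕ) : (box d).card = d := by simp [box]

def vbox (d : ℕ) : Finset (Fin 4 → ℕ) := Fintype.piFinset fun _ => box d

lemma mem_vbox {d : ℕ} {v : Fin 4 → ℕ} : v ∈ vbox d ↔ ∀ k, v k ∈ box d := by
  simp [vbox, Fintype.mem_piFinset]

lemma card_filter_TE (d : ℕ) : ((vbox d).filter TE).card = d := by
  have key : ((vbox d).filter TE).card = (box d).card := by
    refine Finset.card_bij' (fun v _ => v 0) (fun a _ => fun _ => a) ?_ ?_ ?_ ?_
    · intro v hv
      exact (mem_vbox.mp (Finset.mem_filter.mp hv).1) 0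
    · intro a ha
      refine Finset.mem_filter.mpr ⟨mem_vbox.mpr fun k => ha, rfl, rfl, rfl⟩
    · intro v hv
      obtain ⟨h1, h2, h3⟩ := (Finset.mem_filter.mp hv).2
      funext k
      fin_cases k <;> simp <;> omega
    · intro a ha
      rfl
  rw [key, card_box]

lemma card_filter_Q12 (d : ℕ) : ((vbox d).filter Q12).card = d * d := by
  have key : ((vbox d).filter Q12).card = ((box d) ×ˢ (box d)).card := by
    refine Finset.card_bij' (fun v _ => (v 0, v 2)) (fun a _ => ![a.1, a.1, a.2, a.2]) ?_ ?_ ?_ ?_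
    · intro v hv
      have h := mem_vbox.mp (Finset.mem_filter.mp hv).1
      exact Finset.mem_product.mpr ⟨h 0, h 2⟩
    · intro a ha
      obtain ⟨h1, h2⟩ := Finset.mem_product.mp ha
      refine Finset.mem_filter.mpr ⟨mem_vbox.mpr fun k => ?_, rfl, rfl⟩
      fin_cases k <;> simpa
    · intro v hv
      obtain ⟨h1, h2⟩ := (Finset.mem_filter.mp hv).2
      funext k
      fin_cases k <;> simp <;> omega
    · intro a ha
      rfl
  rw [key, Finset.card_product, card_box]

lemma card_filter_T12 (d : ℕ) : ((vbox d).filter T12).card = d * d - d := by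
  have key : ((vbox d).filter T12).card = (box d).offDiag.card := by
    refine Finset.card_bij' (fun v _ => (v 0, v 2)) (fun a _ => ![a.1, a.1, a.2, a.2]) ?_ ?_ ?_ ?_
    · intro v hv
      have h := mem_vbox.mp (Finset.mem_filter.mp hv).1
      exact Finset.mem_offDiag.mpr ⟨h 0, h 2, (Finset.mem_filter.mp hv).2.2⟩
    · intro a ha
      obtain ⟨h1, h2, h3⟩ := Finset.mem_offDiag.mp ha
      refine Finset.mem_filter.mpr ⟨mem_vbox.mpr fun k => ?_, ⟨rfl, rfl⟩, h3⟩
      fin_cases k <;> simpa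
    · intro v hv
      obtain ⟨⟨h1, h2⟩, h3⟩ := (Finset.mem_filter.mp hv).2
      funext k
      fin_cases k <;> simp <;> omega
    · intro a ha
      rfl
  rw [key, Finset.offDiag_card, card_box]

lemma card_filter_T13 (d : ℕ) : ((vbox d).filter T13).card = d * d - d := by
  have key : ((vbox d).filter T13).card = (box d).offDiag.card := by
    refine Finset.card_bij' (fun v _ => (v 0, v 1)) (fun a _ => ![a.1, a.2, a.1, a.2]) ?_ ?_ ?_ ?_
    · intro v hv
      have h := mem_vbox.mp (Finset.mem_filter.mp hv).1
      exact Finset.mem_offDiag.mpr ⟨h 0, h 1, (Finset.mem_filter.mp hv).2.2⟩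
    · intro a ha
      obtain ⟨h1, h2, h3⟩ := Finset.mem_offDiag.mp ha
      refine Finset.mem_filter.mpr ⟨mem_vbox.mpr fun k => ?_, ⟨rfl, rfl⟩, h3⟩
      fin_cases k <;> simpa
    · intro v hv
      obtain ⟨⟨h1, h2⟩, h3⟩ := (Finset.mem_filter.mp hv).2
      funext k
      fin_cases k <;> simp <;> omega
    · intro a ha
      rfl
  rw [key, Finset.offDiag_card, card_box]

lemma card_filter_T14 (d : ℕ) : ((vbox d).filter T14).card = d * d - d := by
  have key : ((vbox d).filter T14).card = (box d).offDiag.card := by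
    refine Finset.card_bij' (fun v _ => (v 0, v 1)) (fun a _ => ![a.1, a.2, a.2, a.1]) ?_ ?_ ?_ ?_
    · intro v hv
      have h := mem_vbox.mp (Finset.mem_filter.mp hv).1
      exact Finset.mem_offDiag.mpr ⟨h 0, h 1, (Finset.mem_filter.mp hv).2.2⟩
    · intro a ha
      obtain ⟨h1, h2, h3⟩ := Finset.mem_offDiag.mp ha
      refine Finset.mem_filter.mpr ⟨mem_vbox.mpr fun k => ?_, ⟨rfl, rfl⟩, h3⟩
      fin_cases k <;> simpa
    · intro v hv
      obtain ⟨⟨h1, h2⟩, h3⟩ := (Finset.mem_filter.mp hv).2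
      funext k
      fin_cases k <;> simp <;> omega
    · intro a ha
      rfl
  rw [key, Finset.offDiag_card, card_box]

end BadAux

namespace BadAux

open Finset

attribute [local instance 10] Classical.propDecidable

/-- last column of a tuple of sequences -/
def lastcol {n : ℕ} (j : Fin 4 → Fin (n + 1) → ℕ) : Fin 4 → ℕ := fun k => j k (Fin.last n)

/-- the finset of good (bad-in-the-problem-sense) tuples -/
noncomputable def GF (n d : ℕ) : Finset (Fin 4 → Fin (n + 1) → ℕ) :=
  (Fintype.piFinset fun _ : Fin 4 => Fintype.piFinset fun _ : Fin (n + 1) => box d).filter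
    (fun j => IsBad n j ∧ j 0 0 = 1 ∧ j 1 0 = 1 ∧ j 2 0 = 2 ∧ j 3 0 = 2)

lemma mem_GF {n d : ℕ} {j : Fin 4 → Fin (n + 1) → ℕ} :
    j ∈ GF n d ↔ (∀ k i, j k i ∈ box d) ∧ IsBad n j ∧
      j 0 0 = 1 ∧ j 1 0 = 1 ∧ j 2 0 = 2 ∧ j 3 0 = 2 := by
  simp [GF, Fintype.mem_piFinset]

noncomputable def cnt (n d : ℕ) (P : (Fin 4 → ℕ) → Prop) : ℕ :=
  ((GF n d).filter (fun j => P (lastcol j))).card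

/-- splitting a bad tuple of length n+2 -/
lemma isBad_succ_iff {n : ℕ} (j : Fin 4 → Fin (n + 2) → ℕ) :
    IsBad (n + 1) j ↔ (IsBad n fun k i => j k i.castSucc) ∧
      StepOK (fun k => j k (Fin.last n).castSucc) (fun k => j k (Fin.last (n + 1))) := by
  constructor
  · intro h
    refine ⟨fun i => ?_, ?_⟩
    · have h2 := h i.castSucc
      simpa [← Fin.succ_castSucc] using h2
    · have h2 := h (Fin.last n)
      simpa [Fin.succ_last] using h2
  · rintro ⟨h1, h2⟩ i
    induction i using Fin.lastCases with
    | last => simpa [Fin.succ_last] using h2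
    | cast i => have := h1 i; simpa [← Fin.succ_castSucc] using this

lemma cnt_succ (n d : ℕ) (P : (Fin 4 → ℕ) → Prop) :
    cnt (n + 1) d P =
      ∑ j ∈ GF n d, ((vbox d).filter fun v => StepOK (lastcol j) v ∧ P v).card := by
  classical
  rw [cnt, ← Finset.card_sigma]
  refine Finset.card_bij'
    (fun j _ => ⟨fun k i => j k i.castSucc, fun k => j k (Fin.last (n + 1))⟩)
    (fun a _ => fun k => Fin.snoc (a.1 k) (a.2 k)) ?_ ?_ ?_ ?_
  · intro j hj
    obtain ⟨hbox, hbad, h1, h2, h3, h4⟩ := mem_GF.mp (Finset.mem_filter.mp hj).1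
    have hP := (Finset.mem_filter.mp hj).2
    obtain ⟨hbad', hstep⟩ := (isBad_succ_iff j).mp hbad
    refine Finset.mem_sigma.mpr ⟨mem_GF.mpr ⟨fun k i => hbox k _, hbad', ?_, ?_, ?_, ?_⟩, ?_⟩
    · simpa using h1
    · simpa using h2
    · simpa using h3
    · simpa using h4
    · refine Finset.mem_filter.mpr ⟨mem_vbox.mpr fun k => hbox k _, ?_, hP⟩
      exact hstep
  · rintro ⟨j', v⟩ ha
    obtain ⟨hj', hv⟩ := Finset.mem_sigma.mp ha
    obtain ⟨hbox, hbad, h1, h2, h3, h4⟩ := mem_GF.mp hj'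
    obtain ⟨hvbox, hstep, hP⟩ := Finset.mem_filter.mp hv
    refine Finset.mem_filter.mpr ⟨mem_GF.mpr ⟨?_, ?_, ?_, ?_, ?_, ?_⟩, ?_⟩
    · intro k i
      induction i using Fin.lastCases with
      | last => simpa [Fin.snoc_last] using mem_vbox.mp hvbox k
      | cast i => simpa [Fin.snoc_castSucc] using hbox k i
    · rw [isBad_succ_iff]
      constructor
      · have : (fun k i => Fin.snoc (α := fun _ => ℕ) (j' k) (v k) i.castSucc) = j' := by
          funext k i; rw [Fin.snoc_castSucc]
        rw [this]; exact hbad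
      · have e1 : (fun k => Fin.snoc (α := fun _ => ℕ) (j' k) (v k) (Fin.last n).castSucc)
            = lastcol j' := by
          funext k; rw [Fin.snoc_castSucc]; rfl
        have e2 : (fun k => Fin.snoc (α := fun _ => ℕ) (j' k) (v k) (Fin.last (n + 1)))
            = v := by
          funext k; rw [Fin.snoc_last]
        rw [e1, e2]; exact hstep
    · have e0 : (0 : Fin (n + 2)) = (0 : Fin (n + 1)).castSucc := by simp
      have hgoal : Fin.snoc (α := fun _ : Fin (n + 2) => ℕ) (j' 0) (v 0) (0 : Fin (n + 2)) = 1 := by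
        rw [e0, Fin.snoc_castSucc]; exact h1
      exact hgoal
    · have e0 : (0 : Fin (n + 2)) = (0 : Fin (n + 1)).castSucc := by simp
      have hgoal : Fin.snoc (α := fun _ : Fin (n + 2) => ℕ) (j' 1) (v 1) (0 : Fin (n + 2)) = 1 := by
        rw [e0, Fin.snoc_castSucc]; exact h2
      exact hgoal
    · have e0 : (0 : Fin (n + 2)) = (0 : Fin (n + 1)).castSucc := by simp
      have hgoal : Fin.snoc (α := fun _ : Fin (n + 2) => ℕ) (j' 2) (v 2) (0 : Fin (n + 2)) = 2 := by
        rw [e0, Fin.snoc_castSucc]; exact h3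
      exact hgoal
    · have e0 : (0 : Fin (n + 2)) = (0 : Fin (n + 1)).castSucc := by simp
      have hgoal : Fin.snoc (α := fun _ : Fin (n + 2) => ℕ) (j' 3) (v 3) (0 : Fin (n + 2)) = 2 := by
        rw [e0, Fin.snoc_castSucc]; exact h4
      exact hgoal
    · have e2 : (fun k => Fin.snoc (α := fun _ : Fin (n + 2) => ℕ) (j' k) (v k) (Fin.last (n + 1))) = v := by
        funext k; rw [Fin.snoc_last]
      have hgoal : P (fun k => Fin.snoc (α := fun _ : Fin (n + 2) => ℕ) (j' k) (v k) (Fin.last (n + 1))) := by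
        rw [e2]; exact hP
      exact hgoal
  · intro j hj
    funext k
    exact Fin.snoc_init_self (j k)
  · rintro ⟨j', v⟩ ha
    refine Sigma.ext ?_ ?_
    · have hgoal : (fun k i => Fin.snoc (α := fun _ : Fin (n + 2) => ℕ) (j' k) (v k) i.castSucc) = j' := by
        funext k i; rw [Fin.snoc_castSucc]
      exact hgoal
    · have e2 : (fun k => Fin.snoc (α := fun _ : Fin (n + 2) => ℕ) (j' k) (v k) (Fin.last (n + 1))) = v := by
        funext k; rw [Fin.snoc_last]
      exact heq_of_eq e2

end BadAux

namespace BadAux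

open Finset

attribute [local instance 10] Classical.propDecidable

lemma lastcol_typed {n d : ℕ} {j : Fin 4 → Fin (n + 1) → ℕ} (hj : j ∈ GF n d) :
    TE (lastcol j) ∨ T12 (lastcol j) ∨ T13 (lastcol j) ∨ T14 (lastcol j) := by
  obtain ⟨hbox, hbad, h1, h2, h3, h4⟩ := mem_GF.mp hj
  cases n with
  | zero =>
    refine Or.inr (Or.inl ⟨⟨?_, ?_⟩, ?_⟩) <;> unfold lastcol <;>
      rw [show (Fin.last 0) = 0 from rfl] <;> omega
  | succ m =>
    have hs := hbad (Fin.last m)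
    have hp := stepOK_paired (by simp only [Fin.succ_last] at hs; exact hs :
      StepOK (fun k => j k (Fin.last m).castSucc) (lastcol j))
    exact paired_typed hp

lemma stepOK_to_TE {u v : Fin 4 → ℕ} (hu : TE u ∨ T12 u ∨ T13 u ∨ T14 u) (hv : TE v) :
    StepOK u v := by
  rcases hu with h|h|h|h
  · exact stepOK_of_Q12 (TE_Q12 h) (TE_Q12 hv)
  · exact stepOK_of_Q12 h.1 (TE_Q12 hv)
  · exact stepOK_of_Q13 h.1 (TE_Q13 hv)
  · exact stepOK_of_Q14 h.1 (TE_Q14 hv)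

lemma cnt_succ_TE (n d : ℕ) : cnt (n + 1) d TE = d * (GF n d).card := by
  rw [cnt_succ]
  have hsum : ∀ j ∈ GF n d,
      ((vbox d).filter fun v => StepOK (lastcol j) v ∧ TE v).card = d := by
    intro j hj
    have : ∀ v ∈ vbox d, (StepOK (lastcol j) v ∧ TE v) ↔ TE v :=
      fun v _ => ⟨And.right, fun hv => ⟨stepOK_to_TE (lastcol_typed hj) hv, hv⟩⟩
    rw [Finset.filter_congr this, card_filter_TE]
  rw [Finset.sum_congr rfl hsum, Finset.sum_const, smul_eq_mul, mul_comm]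

lemma cnt_succ_T12 (n d : ℕ) :
    cnt (n + 1) d T12 = (d * d - d) * (cnt n d TE + cnt n d T12) := by
  rw [cnt_succ]
  have hsum : ∀ j ∈ GF n d,
      ((vbox d).filter fun v => StepOK (lastcol j) v ∧ T12 v).card =
        if TE (lastcol j) ∨ T12 (lastcol j) then d * d - d else 0 := by
    intro j hj
    rcases lastcol_typed hj with h|h|h|h
    · rw [if_pos (Or.inl h)]
      have : ∀ v ∈ vbox d, (StepOK (lastcol j) v ∧ T12 v) ↔ T12 v := fun v _ =>
        ⟨And.right, fun hv => ⟨(stepOK_iff_TE h).mpr (Or.inl hv.1), hv⟩⟩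
      rw [Finset.filter_congr this, card_filter_T12]
    · rw [if_pos (Or.inr h)]
      have : ∀ v ∈ vbox d, (StepOK (lastcol j) v ∧ T12 v) ↔ T12 v := fun v _ =>
        ⟨And.right, fun hv => ⟨(stepOK_iff_T12 h).mpr hv.1, hv⟩⟩
      rw [Finset.filter_congr this, card_filter_T12]
    · rw [if_neg (by rintro (g|g); exacts [TE_not_T13 g h, T12_not_T13 g h])]
      rw [Finset.filter_false_of_mem, Finset.card_empty]
      rintro v _ ⟨hst, hv⟩
      have := (stepOK_iff_T13 h).mp hst
      exact hv.2 this.1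
    · rw [if_neg (by rintro (g|g); exacts [TE_not_T14 g h, T12_not_T14 g h])]
      rw [Finset.filter_false_of_mem, Finset.card_empty]
      rintro v _ ⟨hst, hv⟩
      have hq := (stepOK_iff_T14 h).mp hst
      obtain ⟨⟨a1, a2⟩, a3⟩ := hv
      obtain ⟨b1, b2⟩ := hq
      exact a3 (by omega : v 0 = v 2)
  have hdisj : Disjoint ((GF n d).filter fun x => TE (lastcol x))
      ((GF n d).filter fun x => T12 (lastcol x)) := by
    refine Finset.disjoint_left.mpr ?_
    intro j hj1 hj2
    exact TE_not_T12 (Finset.mem_filter.mp hj1).2 (Finset.mem_filter.mp hj2).2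
  rw [Finset.sum_congr rfl hsum, Finset.sum_ite, Finset.sum_const, Finset.sum_const,
    smul_eq_mul, smul_zero, add_zero, Finset.filter_or,
    Finset.card_union_of_disjoint hdisj, mul_comm]
  rfl

end BadAux

namespace BadAux

open Finset

attribute [local instance 10] Classical.propDecidable

lemma cnt_succ_T13 (n d : ℕ) :
    cnt (n + 1) d T13 = (d * d - d) * (cnt n d TE + cnt n d T13) := by
  rw [cnt_succ]
  have hsum : ∀ j ∈ GF n d,
      ((vbox d).filter fun v => StepOK (lastcol j) v ∧ T13 v).card =
        if TE (lastcol j) ∨ T13 (lastcol j) then d * d - d else 0 := by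
    intro j hj
    rcases lastcol_typed hj with h|h|h|h
    · rw [if_pos (Or.inl h)]
      have : ∀ v ∈ vbox d, (StepOK (lastcol j) v ∧ T13 v) ↔ T13 v := fun v _ =>
        ⟨And.right, fun hv => ⟨(stepOK_iff_TE h).mpr (Or.inr (Or.inl hv.1)), hv⟩⟩
      rw [Finset.filter_congr this, card_filter_T13]
    · rw [if_neg (by rintro (g|g); exacts [TE_not_T12 g h, T12_not_T13 h g])]
      rw [Finset.filter_false_of_mem, Finset.card_empty]
      rintro v _ ⟨hst, hv⟩
      have hq := (stepOK_iff_T12 h).mp hst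
      exact hv.2 hq.1
    · rw [if_pos (Or.inr h)]
      have : ∀ v ∈ vbox d, (StepOK (lastcol j) v ∧ T13 v) ↔ T13 v := fun v _ =>
        ⟨And.right, fun hv => ⟨(stepOK_iff_T13 h).mpr hv.1, hv⟩⟩
      rw [Finset.filter_congr this, card_filter_T13]
    · rw [if_neg (by rintro (g|g); exacts [TE_not_T14 g h, T13_not_T14 g h])]
      rw [Finset.filter_false_of_mem, Finset.card_empty]
      rintro v _ ⟨hst, hv⟩
      have hq := (stepOK_iff_T14 h).mp hst
      obtain ⟨⟨a1, a2⟩, a3⟩ := hv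
      obtain ⟨b1, b2⟩ := hq
      exact a3 (by omega : v 0 = v 1)
  have hdisj : Disjoint ((GF n d).filter fun x => TE (lastcol x))
      ((GF n d).filter fun x => T13 (lastcol x)) := by
    refine Finset.disjoint_left.mpr ?_
    intro j hj1 hj2
    exact TE_not_T13 (Finset.mem_filter.mp hj1).2 (Finset.mem_filter.mp hj2).2
  rw [Finset.sum_congr rfl hsum, Finset.sum_ite, Finset.sum_const, Finset.sum_const,
    smul_eq_mul, smul_zero, add_zero, Finset.filter_or,
    Finset.card_union_of_disjoint hdisj, mul_comm]
  rfl

lemma cnt_succ_T14 (n d : ℕ) :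
    cnt (n + 1) d T14 = (d * d - d) * (cnt n d TE + cnt n d T14) := by
  rw [cnt_succ]
  have hsum : ∀ j ∈ GF n d,
      ((vbox d).filter fun v => StepOK (lastcol j) v ∧ T14 v).card =
        if TE (lastcol j) ∨ T14 (lastcol j) then d * d - d else 0 := by
    intro j hj
    rcases lastcol_typed hj with h|h|h|h
    · rw [if_pos (Or.inl h)]
      have : ∀ v ∈ vbox d, (StepOK (lastcol j) v ∧ T14 v) ↔ T14 v := fun v _ =>
        ⟨And.right, fun hv => ⟨(stepOK_iff_TE h).mpr (Or.inr (Or.inr hv.1)), hv⟩⟩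
      rw [Finset.filter_congr this, card_filter_T14]
    · rw [if_neg (by rintro (g|g); exacts [TE_not_T12 g h, T12_not_T14 h g])]
      rw [Finset.filter_false_of_mem, Finset.card_empty]
      rintro v _ ⟨hst, hv⟩
      have hq := (stepOK_iff_T12 h).mp hst
      exact hv.2 hq.1
    · rw [if_neg (by rintro (g|g); exacts [TE_not_T13 g h, T13_not_T14 h g])]
      rw [Finset.filter_false_of_mem, Finset.card_empty]
      rintro v _ ⟨hst, hv⟩
      have hq := (stepOK_iff_T13 h).mp hst
      obtain ⟨⟨a1, a2⟩, a3⟩ := hv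
      obtain ⟨b1, b2⟩ := hq
      exact a3 (by omega : v 0 = v 1)
    · rw [if_pos (Or.inr h)]
      have : ∀ v ∈ vbox d, (StepOK (lastcol j) v ∧ T14 v) ↔ T14 v := fun v _ =>
        ⟨And.right, fun hv => ⟨(stepOK_iff_T14 h).mpr hv.1, hv⟩⟩
      rw [Finset.filter_congr this, card_filter_T14]
  have hdisj : Disjoint ((GF n d).filter fun x => TE (lastcol x))
      ((GF n d).filter fun x => T14 (lastcol x)) := by
    refine Finset.disjoint_left.mpr ?_
    intro j hj1 hj2
    exact TE_not_T14 (Finset.mem_filter.mp hj1).2 (Finset.mem_filter.mp hj2).2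
  rw [Finset.sum_congr rfl hsum, Finset.sum_ite, Finset.sum_const, Finset.sum_const,
    smul_eq_mul, smul_zero, add_zero, Finset.filter_or,
    Finset.card_union_of_disjoint hdisj, mul_comm]
  rfl

lemma card_GF_eq (n d : ℕ) :
    (GF n d).card = cnt n d TE + cnt n d T12 + cnt n d T13 + cnt n d T14 := by
  have key : ∀ j ∈ GF n d, (1 : ℕ) =
      (if TE (lastcol j) then 1 else 0) + (if T12 (lastcol j) then 1 else 0) +
      (if T13 (lastcol j) then 1 else 0) + (if T14 (lastcol j) then 1 else 0) := by
    intro j hj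
    rcases lastcol_typed hj with h|h|h|h
    · rw [if_pos h, if_neg (TE_not_T12 h), if_neg (TE_not_T13 h), if_neg (TE_not_T14 h)]
    · rw [if_neg (T12_not_TE h), if_pos h, if_neg (T12_not_T13 h), if_neg (T12_not_T14 h)]
    · rw [if_neg (T13_not_TE h), if_neg (fun g => T12_not_T13 g h), if_pos h,
        if_neg (T13_not_T14 h)]
    · rw [if_neg (T14_not_TE h), if_neg (fun g => T12_not_T14 g h),
        if_neg (fun g => T13_not_T14 g h), if_pos h]
  rw [Finset.card_eq_sum_ones, Finset.sum_congr rfl key, Finset.sum_add_distrib,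
    Finset.sum_add_distrib, Finset.sum_add_distrib, ← Finset.card_filter,
    ← Finset.card_filter, ← Finset.card_filter, ← Finset.card_filter]
  rfl

/-- the unique element of `GF 0 d` -/
def j0 : Fin 4 → Fin 1 → ℕ := fun k _ => ![1, 1, 2, 2] k

lemma GF_zero (d : ℕ) (hd : 2 ≤ d) : GF 0 d = {j0} := by
  apply Finset.eq_singleton_iff_unique_mem.mpr
  constructor
  · refine mem_GF.mpr ⟨?_, ?_, rfl, rfl, rfl, rfl⟩
    · intro k i
      fin_cases k <;> simp [j0, box] <;> omega
    · intro i; exact absurd i.2 (by omega)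
  · intro j hj
    obtain ⟨hbox, hbad, h1, h2, h3, h4⟩ := mem_GF.mp hj
    funext k i
    have hi : i = 0 := by omega
    subst hi
    fin_cases k <;> assumption

lemma cnt_zero_TE (d : ℕ) (hd : 2 ≤ d) : cnt 0 d TE = 0 := by
  rw [cnt, GF_zero d hd, Finset.filter_singleton, if_neg, Finset.card_empty]
  intro h
  exact absurd h.2.1 (by norm_num [j0, lastcol] <;> decide)

lemma cnt_zero_T12 (d : ℕ) (hd : 2 ≤ d) : cnt 0 d T12 = 1 := by
  rw [cnt, GF_zero d hd, Finset.filter_singleton, if_pos, Finset.card_singleton]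
  exact ⟨⟨rfl, rfl⟩, by norm_num [j0, lastcol] <;> decide⟩

lemma cnt_zero_T13 (d : ℕ) (hd : 2 ≤ d) : cnt 0 d T13 = 0 := by
  rw [cnt, GF_zero d hd, Finset.filter_singleton, if_neg, Finset.card_empty]
  intro h
  exact absurd h.1.1 (by norm_num [j0, lastcol] <;> decide)

lemma cnt_zero_T14 (d : ℕ) (hd : 2 ≤ d) : cnt 0 d T14 = 0 := by
  rw [cnt, GF_zero d hd, Finset.filter_singleton, if_neg, Finset.card_empty]
  intro h
  exact absurd h.1.1 (by norm_num [j0, lastcol] <;> decide)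

end BadAux

namespace BadAux

open Finset Polynomial

attribute [local instance 10] Classical.propDecidable

noncomputable def pp : ℕ → Polynomial ℤ × Polynomial ℤ × Polynomial ℤ × Polynomial ℤ
  | 0 => (0, 1, 0, 0)
  | n + 1 =>
    let q := pp n
    (X * (q.1 + q.2.1 + q.2.2.1 + q.2.2.2),
     X * (X - 1) * (q.1 + q.2.1),
     X * (X - 1) * (q.1 + q.2.2.1),
     X * (X - 1) * (q.1 + q.2.2.2))

lemma pp_eval (n : ℕ) (d : ℕ) (hd : 2 ≤ d) :
    (pp n).1.eval (d : ℤ) = cnt n d TE ∧ (pp n).2.1.eval (d : ℤ) = cnt n d T12 ∧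
    (pp n).2.2.1.eval (d : ℤ) = cnt n d T13 ∧ (pp n).2.2.2.eval (d : ℤ) = cnt n d T14 := by
  induction n with
  | zero =>
    simp [pp, cnt_zero_TE d hd, cnt_zero_T12 d hd, cnt_zero_T13 d hd, cnt_zero_T14 d hd]
  | succ m ih =>
    obtain ⟨e1, e2, e3, e4⟩ := ih
    have hdd : ((d * d - d : ℕ) : ℤ) = (d : ℤ) * ((d : ℤ) - 1) := by
      have h : d ≤ d * d := Nat.le_mul_of_pos_left d (by omega)
      rw [Nat.cast_sub h]
      push_cast
      ring
    have hA : (pp (m + 1)).1 =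
        X * ((pp m).1 + (pp m).2.1 + (pp m).2.2.1 + (pp m).2.2.2) := rfl
    have hB : (pp (m + 1)).2.1 = X * (X - 1) * ((pp m).1 + (pp m).2.1) := rfl
    have hC : (pp (m + 1)).2.2.1 = X * (X - 1) * ((pp m).1 + (pp m).2.2.1) := rfl
    have hD : (pp (m + 1)).2.2.2 = X * (X - 1) * ((pp m).1 + (pp m).2.2.2) := rfl
    refine ⟨?_, ?_, ?_, ?_⟩
    · rw [hA, cnt_succ_TE, card_GF_eq]
      simp only [eval_mul, eval_add, eval_X, e1, e2, e3, e4]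
      push_cast
      ring
    · rw [hB, cnt_succ_T12]
      simp only [eval_mul, eval_add, eval_sub, eval_X, eval_one, e1, e2]
      push_cast [hdd]
      ring
    · rw [hC, cnt_succ_T13]
      simp only [eval_mul, eval_add, eval_sub, eval_X, eval_one, e1, e3]
      push_cast [hdd]
      ring
    · rw [hD, cnt_succ_T14]
      simp only [eval_mul, eval_add, eval_sub, eval_X, eval_one, e1, e4]
      push_cast [hdd]
      ring

lemma degXX : (X * (X - 1) : Polynomial ℤ).degree = 2 := by
  rw [Polynomial.degree_mul, Polynomial.degree_X]
  have h : (X - 1 : Polynomial ℤ) = X - C 1 := by simp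
  rw [h, Polynomial.degree_X_sub_C]
  decide

lemma mul_deg_lt {f : Polynomial ℤ} {m : ℕ}
    (hf : f.degree < ((2 * m : ℕ) : WithBot ℕ)) :
    (X * (X - 1) * f).degree < ((2 * (m + 1) : ℕ) : WithBot ℕ) := by
  calc (X * (X - 1) * f).degree ≤ (X * (X - 1) : Polynomial ℤ).degree + f.degree :=
        Polynomial.degree_mul_le _ _
    _ = 2 + f.degree := by rw [degXX]
    _ < 2 + ((2 * m : ℕ) : WithBot ℕ) := WithBot.add_lt_add_left (by decide) hf
    _ = ((2 * (m + 1) : ℕ) : WithBot ℕ) := by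
        have : ((2:ℕ) : WithBot ℕ) = (2 : WithBot ℕ) := rfl
        rw [← this, ← Nat.cast_add]
        norm_num
        ring_nf

lemma pp_deg (n : ℕ) :
    ∃ e : Polynomial ℤ, (pp n).2.1 = X ^ (2 * n) + e ∧
      e.degree < ((2 * n : ℕ) : WithBot ℕ) ∧
      (pp n).1.degree < ((2 * n : ℕ) : WithBot ℕ) ∧
      (pp n).2.2.1.degree < ((2 * n : ℕ) : WithBot ℕ) ∧
      (pp n).2.2.2.degree < ((2 * n : ℕ) : WithBot ℕ) := by
  induction n with
  | zero =>
    refine ⟨0, by simp [pp], ?_, ?_, ?_, ?_⟩ <;>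
      simp [pp, Polynomial.degree_zero] <;> exact WithBot.bot_lt_coe 0
  | succ m ih =>
    obtain ⟨e, hB, he, hA, hC, hD⟩ := ih
    have hdegB : (pp m).2.1.degree = ((2 * m : ℕ) : WithBot ℕ) := by
      rw [hB, Polynomial.degree_add_eq_left_of_degree_lt, Polynomial.degree_X_pow]
      rw [Polynomial.degree_X_pow]
      exact he
    have hsum : ((pp m).1 + (pp m).2.1 + (pp m).2.2.1 + (pp m).2.2.2).degree
        ≤ ((2 * m : ℕ) : WithBot ℕ) := by
      refine le_trans (Polynomial.degree_add_le _ _) (max_le ?_ hD.le)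
      refine le_trans (Polynomial.degree_add_le _ _) (max_le ?_ hC.le)
      exact le_trans (Polynomial.degree_add_le _ _) (max_le hA.le hdegB.le)
    have hA' : (pp (m + 1)).1.degree < ((2 * (m + 1) : ℕ) : WithBot ℕ) := by
      have h1 : (pp (m + 1)).1 =
          X * ((pp m).1 + (pp m).2.1 + (pp m).2.2.1 + (pp m).2.2.2) := rfl
      rw [h1]
      calc (X * _).degree ≤ (X : Polynomial ℤ).degree + _ := Polynomial.degree_mul_le _ _
        _ ≤ 1 + ((2 * m : ℕ) : WithBot ℕ) := by
            rw [Polynomial.degree_X]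
            exact add_le_add_right hsum 1
        _ < ((2 * (m + 1) : ℕ) : WithBot ℕ) := by
            have : (1 : WithBot ℕ) + ((2 * m : ℕ) : WithBot ℕ) = ((2 * m + 1 : ℕ) : WithBot ℕ) := by
              rw [show (1 : WithBot ℕ) = ((1:ℕ) : WithBot ℕ) from rfl, ← Nat.cast_add]
              norm_num
              ring_nf
            rw [this]
            exact_mod_cast (by omega : 2 * m + 1 < 2 * (m + 1))
    have hC' : (pp (m + 1)).2.2.1.degree < ((2 * (m + 1) : ℕ) : WithBot ℕ) := by
      have h1 : (pp (m + 1)).2.2.1 = X * (X - 1) * ((pp m).1 + (pp m).2.2.1) := rfl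
      rw [h1]
      exact mul_deg_lt (lt_of_le_of_lt (Polynomial.degree_add_le _ _) (max_lt hA hC))
    have hD' : (pp (m + 1)).2.2.2.degree < ((2 * (m + 1) : ℕ) : WithBot ℕ) := by
      have h1 : (pp (m + 1)).2.2.2 = X * (X - 1) * ((pp m).1 + (pp m).2.2.2) := rfl
      rw [h1]
      exact mul_deg_lt (lt_of_le_of_lt (Polynomial.degree_add_le _ _) (max_lt hA hD))
    refine ⟨-(X ^ (2 * m + 1)) + X * (X - 1) * ((pp m).1 + e), ?_, ?_, hA', hC', hD'⟩
    · have h1 : (pp (m + 1)).2.1 = X * (X - 1) * ((pp m).1 + (pp m).2.1) := rfl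
      rw [h1, hB]
      ring
    · refine lt_of_le_of_lt (Polynomial.degree_add_le _ _) (max_lt ?_ ?_)
      · rw [Polynomial.degree_neg, Polynomial.degree_X_pow]
        exact_mod_cast (by omega : 2 * m + 1 < 2 * (m + 1))
      · exact mul_deg_lt (lt_of_le_of_lt (Polynomial.degree_add_le _ _) (max_lt hA he))

lemma badCount_eq (n d : ℕ) : badCountOneTwo n d = (GF n d).card := by
  have hset : {j : Fin 4 → Fin (n + 1) → ℕ |
      (∀ k i, j k i ∈ Finset.Icc 1 d) ∧ IsBad n j ∧
        j 0 0 = 1 ∧ j 1 0 = 1 ∧ j 2 0 = 2 ∧ j 3 0 = 2} = ↑(GF n d) := by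
    ext j
    simp only [Set.mem_setOf_eq, Finset.mem_coe, mem_GF, box]
  rw [badCountOneTwo]
  have h1 := Nat.card_coe_set_eq {j : Fin 4 → Fin (n + 1) → ℕ |
      (∀ k i, j k i ∈ Finset.Icc 1 d) ∧ IsBad n j ∧
        j 0 0 = 1 ∧ j 1 0 = 1 ∧ j 2 0 = 2 ∧ j 3 0 = 2}
  rw [show Nat.card {j : Fin 4 → Fin (n + 1) → ℕ //
      (∀ k i, j k i ∈ Finset.Icc 1 d) ∧ IsBad n j ∧
        j 0 0 = 1 ∧ j 1 0 = 1 ∧ j 2 0 = 2 ∧ j 3 0 = 2} = Nat.card ↥{j : Fin 4 → Fin (n + 1) → ℕ |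
      (∀ k i, j k i ∈ Finset.Icc 1 d) ∧ IsBad n j ∧
        j 0 0 = 1 ∧ j 1 0 = 1 ∧ j 2 0 = 2 ∧ j 3 0 = 2} from rfl, h1, hset,
    Set.ncard_coe_finset]

end BadAux

theorem badCountOneTwo_poly (n : ℕ) (hn : 1 ≤ n) :
    ∃ p : Polynomial ℤ, p.natDegree = 2 * n ∧ p.leadingCoeff = 1 ∧
      ∀ d : ℕ, 2 ≤ d → (badCountOneTwo n d : ℤ) = p.eval (d : ℤ) := by
  classical
  open BadAux Polynomial in
  obtain ⟨e, hB, he, hA, hC, hD⟩ := BadAux.pp_deg n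
  set p : Polynomial ℤ :=
    (BadAux.pp n).1 + (BadAux.pp n).2.1 + (BadAux.pp n).2.2.1 + (BadAux.pp n).2.2.2 with hpdef
  have hp : p = Polynomial.X ^ (2 * n) +
      ((BadAux.pp n).1 + e + (BadAux.pp n).2.2.1 + (BadAux.pp n).2.2.2) := by
    rw [hpdef, hB]; ring
  have hg : ((BadAux.pp n).1 + e + (BadAux.pp n).2.2.1 + (BadAux.pp n).2.2.2).degree <
      (Polynomial.X ^ (2 * n) : Polynomial ℤ).degree := by
    rw [Polynomial.degree_X_pow]
    refine lt_of_le_of_lt (Polynomial.degree_add_le _ _) (max_lt ?_ hD)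
    refine lt_of_le_of_lt (Polynomial.degree_add_le _ _) (max_lt ?_ hC)
    exact lt_of_le_of_lt (Polynomial.degree_add_le _ _) (max_lt hA he)
  have hdeg : p.degree = ((2 * n : ℕ) : WithBot ℕ) := by
    rw [hp, Polynomial.degree_add_eq_left_of_degree_lt hg, Polynomial.degree_X_pow]
  refine ⟨p, Polynomial.natDegree_eq_of_degree_eq_some hdeg, ?_, ?_⟩
  · rw [hp, add_comm, Polynomial.leadingCoeff_add_of_degree_lt hg,
      Polynomial.leadingCoeff_X_pow]
  · intro d hd
    obtain ⟨e1, e2, e3, e4⟩ := BadAux.pp_eval n d hd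
    rw [BadAux.badCount_eq, BadAux.card_GF_eq, hpdef]
    simp only [Polynomial.eval_add, e1, e2, e3, e4]
    push_cast
    ring
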